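/- arXiv:2312.04973 — 2 statements merged into one kernel-verified Lean document; each statement's English description precedes it below -/
import Mathlib

section
/- Let u be an n×n real matrix (rows indexed by actions a_1,…,a_n, columns by states θ_1,…,θ_n) that is upper-triangular (u(i,k)=0 for i>k), nonnegative, with strictly positive diagonal (u(k,k)>0), and whose nonzero column entries are nondecreasing in the action index: u(i,k) ≤ u(j,k) whenever i < j ≤ k. Then for every nonempty subset S ⊆ {1,…,n} there exists a probability vector μ supported on {θ_k : k∈S} such that the receiver's expected utility Σ_k u(i,θ_k)·μ(θ_k) is the same for all actions a_i with i∈S. -/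
open Finset in
/-- for an upper-triangular, nonnegative receiver utility matrix with strictly
positive diagonal whose nonzero column entries are nondecreasing in the action index, for
every nonempty subset `S` of actions there is a belief supported on the corresponding states
under which the receiver is indifferent among all actions in `S`. -/
theorem exists_indifferent_belief (n : ℕ) (u : Fin n → Fin n → ℝ)
    (h_upper : ∀ i k : Fin n, k < i → u i k = 0)
    (h_nonneg : ∀ i k : Fin n, 0 ≤ u i k)
    (h_diag : ∀ k : Fin n, 0 < u k k)
    (h_mono : ∀ i j k : Fin n, i < j → j ≤ k → u i k ≤ u j k) :
    ∀ S : Finset (Fin n), S.Nonempty →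
      ∃ μ : Fin n → ℝ, (∀ k, 0 ≤ μ k) ∧ (∑ k, μ k = 1) ∧
        (∀ k ∉ S, μ k = 0) ∧
        ∃ c : ℝ, ∀ i ∈ S, ∑ k, u i k * μ k = c := by
  intro S
  induction S using Finset.strongInduction with
  | _ S ih =>
  intro hS
  set k1 := S.min' hS with hk1
  have hk1S : k1 ∈ S := S.min'_mem hS
  by_cases hE : S.erase k1 = ∅
  · -- S = {k1}
    have hSing : S = {k1} := by
      apply Finset.eq_singleton_iff_unique_mem.mpr
      refine ⟨hk1S, fun x hx => ?_⟩
      by_contra hne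
      exact absurd (Finset.mem_erase.mpr ⟨hne, hx⟩) (by simp [hE])
    refine ⟨fun k => if k = k1 then 1 else 0, ?_, ?_, ?_, u k1 k1, ?_⟩
    · intro k; positivity
    · simp
    · intro k hk
      have : k ≠ k1 := by rintro rfl; exact hk hk1S
      simp [this]
    · intro i hi
      have hik : i = k1 := by rw [hSing] at hi; simpa using hi
      subst hik
      simp
  · have hS' : (S.erase k1).Nonempty := Finset.nonempty_of_ne_empty hE
    obtain ⟨μ', hpos, hsum, hsupp, c', hc'⟩ :=
      ih (S.erase k1) (Finset.erase_ssubset hk1S) hS'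
    set j := (S.erase k1).min' hS' with hj
    have hjS' : j ∈ S.erase k1 := Finset.min'_mem _ _
    have hk1j : k1 < j := by
      have := Finset.mem_erase.mp hjS'
      exact lt_of_le_of_ne (S.min'_le j this.2) (Ne.symm this.1)
    set A := ∑ k, u k1 k * μ' k with hA
    have hAc' : A ≤ c' := by
      rw [← hc' j hjS']
      apply Finset.sum_le_sum
      intro k _
      by_cases hk : k ∈ S.erase k1
      · have hjk : j ≤ k := Finset.min'_le _ _ hk
        exact mul_le_mul_of_nonneg_right (h_mono k1 j k hk1j hjk) (hpos k)
      · rw [hsupp k hk]; simp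
    have hApos : 0 ≤ A := Finset.sum_nonneg fun k _ => mul_nonneg (h_nonneg _ _) (hpos k)
    set d := c' - A with hd
    have hd0 : 0 ≤ d := by simp [hd]; linarith
    set D := u k1 k1 + d with hD
    have hD0 : 0 < D := by have := h_diag k1; simp [hD]; linarith
    set t := d / D with ht
    have ht0 : 0 ≤ t := div_nonneg hd0 hD0.le
    have ht1 : t ≤ 1 := by
      rw [ht, div_le_one hD0]
      have := h_diag k1
      linarith
    have h1t : 1 - t = u k1 k1 / D := by
      rw [ht]
      field_simp [hD]
      linarith
    refine ⟨fun k => (if k = k1 then t else 0) + (1 - t) * μ' k, ?_, ?_, ?_, (1 - t) * c', ?_⟩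
    · intro k
      have h2 : 0 ≤ (1 - t) * μ' k := mul_nonneg (by linarith) (hpos k)
      by_cases hk : k = k1 <;> simp [hk] <;>
        linarith [mul_nonneg (sub_nonneg.mpr ht1) (hpos k1)]
    · rw [Finset.sum_add_distrib, ← Finset.mul_sum, hsum]
      simp
    · intro k hk
      have h1 : k ≠ k1 := by rintro rfl; exact hk hk1S
      have h2 : μ' k = 0 := hsupp k (by simp [hk])
      simp [h1, h2]
    · intro i hi
      have key : ∀ i : Fin n, ∑ k, u i k * ((if k = k1 then t else 0) + (1 - t) * μ' k)
          = u i k1 * t + (1 - t) * ∑ k, u i k * μ' k := by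
        intro i
        have he : ∀ k, u i k * ((if k = k1 then t else 0) + (1 - t) * μ' k)
            = (if k = k1 then u i k1 * t else 0) + (1 - t) * (u i k * μ' k) := by
          intro k; by_cases hk : k = k1 <;> simp [hk] <;> ring
        simp only [he]
        rw [Finset.sum_add_distrib, Finset.sum_ite_eq' Finset.univ k1, ← Finset.mul_sum]
        simp
      rcases eq_or_ne i k1 with rfl | hne
      · rw [key, ← hA, ht, h1t]
        linear_combination (u k1 k1 / D) * hd
      · have hiS' : i ∈ S.erase k1 := Finset.mem_erase.mpr ⟨hne, hi⟩
        have hk1i : k1 < i := lt_of_le_of_ne (S.min'_le i hi) (Ne.symm hne)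
        have hz : u i k1 = 0 := h_upper i k1 hk1i
        rw [key, hc' i hiS', hz]
        ring
end

section
/- In the credence goods market with u(a_i,θ_j) = c − p_i − l·1[i<j], p_1 < … < p_n, l > 0, and c > p_n + l, the receiver utility is weakly logarithmically supermodular: for all 1 ≤ i < j ≤ n and all k < n with j ≠ k, u(a_i,θ_k)·u(a_j,θ_{k+1}) ≥ u(a_j,θ_k)·u(a_i,θ_{k+1}). -/
/-- in the credence goods market, the receiver's utility
`u(a_i,θ_j) = c − p_i − l·1[i<j]` is weakly logarithmically supermodular:
`u(a_i,θ_k)·u(a_j,θ_{k+1}) ≥ u(a_j,θ_k)·u(a_i,θ_{k+1})` for all `i < j` and `k < n`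
with `j ≠ k`. -/
theorem credence_goods_weakly_log_supermodular (n : ℕ)
    (p : Fin (n + 1) → ℝ) (hp : StrictMono p)
    (l c : ℝ) (hl : 0 < l) (hc : p (Fin.last n) + l < c)
    (u : Fin (n + 1) → Fin (n + 1) → ℝ)
    (hu : ∀ i j : Fin (n + 1), u i j = c - p i - if i < j then l else 0) :
    ∀ (i j k : Fin (n + 1)) (hk : (k : ℕ) + 1 ≤ n), i < j → j ≠ k →
      u j k * u i ⟨(k : ℕ) + 1, Nat.lt_succ_of_le hk⟩ ≤
        u i k * u j ⟨(k : ℕ) + 1, Nat.lt_succ_of_le hk⟩ := by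
  intro i j k hk hij hjk
  have hij' : (i : ℕ) < j := hij
  have hpj : p j ≤ p (Fin.last n) := hp.monotone (Fin.le_last j)
  have hB : 0 < c - p j := by linarith
  have hjk' : (j : ℕ) ≠ (k : ℕ) := fun h => hjk (Fin.ext h)
  simp only [hu, Fin.lt_def]
  rcases lt_or_gt_of_ne hjk' with h | h
  · have h1 : (i : ℕ) < k := lt_trans hij' h
    rw [if_pos h1, if_pos h, if_pos (Nat.lt_succ_of_lt h1), if_pos (Nat.lt_succ_of_lt h)]
    nlinarith
  · have h2 : ¬ (j : ℕ) < k := not_lt.mpr h.le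
    have h3 : ¬ (j : ℕ) < k + 1 := by omega
    rw [if_neg h2, if_neg h3]
    rcases lt_trichotomy (i : ℕ) (k : ℕ) with hi | hi | hi
    · rw [if_pos hi, if_pos (Nat.lt_succ_of_lt hi)]
      nlinarith
    · rw [hi, if_neg (lt_irrefl _), if_pos (Nat.lt_succ_self _)]
      nlinarith
    · rw [if_neg (not_lt.mpr hi.le), if_neg (not_lt.mpr hi)]
      nlinarith
end
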